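/- Let 0 < x₁ < x₂ and suppose μ((x₂,∞)) > 0. Then h(x₁)/x₁ > h(x₂)/x₂; in particular, if μ((x,∞)) > 0 for every x > 0, the map x ↦ h(x)/x is strictly decreasing on (0,∞). -/

import Mathlib

open MeasureTheory Set

/-- If `0 < x₁ < x₂` and `μ((x₂,∞)) > 0`, then `h(x₁)/x₁ > h(x₂)/x₂` for
`h(x) = ∫ max(x,y) dμ(y)`; in particular, if `μ((x,∞)) > 0` for every `x > 0`,
then `x ↦ h(x)/x` is strictly decreasing on `(0,∞)`. -/
theorem expected_max_ratio_strict_anti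
    (μ : Measure ℝ) [IsProbabilityMeasure μ]
    (hsupp : μ {x : ℝ | x < 0} = 0) (hmean : Integrable id μ)
    (h : ℝ → ℝ) (hh : ∀ x : ℝ, h x = ∫ y, max x y ∂μ) :
    (∀ x₁ x₂ : ℝ, 0 < x₁ → x₁ < x₂ → 0 < μ (Ioi x₂) → h x₂ / x₂ < h x₁ / x₁) ∧
    ((∀ x : ℝ, 0 < x → 0 < μ (Ioi x)) →
      StrictAntiOn (fun x : ℝ => h x / x) (Ioi 0)) := by
  have hint : ∀ x : ℝ, Integrable (fun y => max x y) μ := by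
    intro x
    refine Integrable.mono' ((integrable_const |x|).add hmean.abs)
      (continuous_const.max continuous_id).aestronglyMeasurable ?_
    filter_upwards with y
    have : |max x y| ≤ |x| + |y| := by
      rcases le_total x y with h1 | h1 <;>
        [rw [max_eq_right h1]; rw [max_eq_left h1]] <;>
        cases abs_cases x <;> cases abs_cases y <;> linarith
    simpa using this
  have hae : ∀ᵐ y ∂μ, (0 : ℝ) ≤ y := by
    rw [ae_iff]; simpa [not_le] using hsupp
  have key : ∀ x₁ x₂ : ℝ, 0 < x₁ → x₁ < x₂ → 0 < μ (Ioi x₂) → h x₂ / x₂ < h x₁ / x₁ := by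
    intro x₁ x₂ hx₁ hx₁₂ hμ
    have hx₂ : (0:ℝ) < x₂ := hx₁.trans hx₁₂
    set g : ℝ → ℝ := fun y => max x₁ y / x₁ - max x₂ y / x₂ with hg
    have hgi : Integrable g μ := ((hint x₁).div_const x₁).sub ((hint x₂).div_const x₂)
    have hgnn : ∀ᵐ y ∂μ, 0 ≤ g y := by
      filter_upwards [hae] with y hy
      have h1 : max x₁ y / x₁ = max 1 (y / x₁) := by
        rw [← max_div_div_right hx₁.le, div_self hx₁.ne']
      have h2 : max x₂ y / x₂ = max 1 (y / x₂) := by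
        rw [← max_div_div_right hx₂.le, div_self hx₂.ne']
      have : y / x₂ ≤ y / x₁ := div_le_div_of_nonneg_left hy hx₁ hx₁₂.le
      simp only [hg, h1, h2, sub_nonneg]
      exact max_le_max le_rfl this
    set c : ℝ := x₂ / x₁ - 1 with hc
    have hcpos : 0 < c := by
      have h1 : 1 < x₂ / x₁ := (one_lt_div hx₁).mpr hx₁₂
      rw [hc]; linarith
    have hlb : ∀ y ∈ Ioi x₂, c ≤ g y := by
      intro y hy
      simp only [mem_Ioi] at hy
      have hy1 : max x₁ y = y := max_eq_right (hx₁₂.le.trans hy.le)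
      have hy2 : max x₂ y = y := max_eq_right hy.le
      have hceq : c = (x₂ - x₁) / x₁ := by rw [hc]; field_simp
      rw [hg]
      simp only [hy1, hy2]
      rw [hceq, div_sub_div _ _ hx₁.ne' hx₂.ne', div_le_div_iff₀ hx₁ (by positivity)]
      nlinarith [mul_le_mul_of_nonneg_right hy.le (sub_nonneg.mpr hx₁₂.le), hx₁, hx₂]
    have hμfin : μ (Ioi x₂) ≠ ⊤ := measure_ne_top μ _
    have h1 : c * (μ (Ioi x₂)).toReal ≤ ∫ y in Ioi x₂, g y ∂μ :=
      by have := setIntegral_ge_of_const_le measurableSet_Ioi hμfin hlb (hgi.integrableOn)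
         rw [smul_eq_mul, mul_comm] at this; exact this
    have h2 : ∫ y in Ioi x₂, g y ∂μ ≤ ∫ y, g y ∂μ :=
      setIntegral_le_integral hgi hgnn
    have hpos : 0 < ∫ y, g y ∂μ := by
      have : 0 < c * (μ (Ioi x₂)).toReal :=
        mul_pos hcpos (ENNReal.toReal_pos hμ.ne' hμfin)
      linarith
    have heq : ∫ y, g y ∂μ = h x₁ / x₁ - h x₂ / x₂ := by
      rw [hg, integral_sub ((hint x₁).div_const x₁) ((hint x₂).div_const x₂),
        integral_div, integral_div, hh x₁, hh x₂]
    linarith [heq ▸ hpos]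
  refine ⟨key, fun hall x₁ hx₁ x₂ hx₂ hlt => ?_⟩
  exact key x₁ x₂ hx₁ hlt (hall x₂ (lt_trans hx₁ hlt))
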